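/- Let F(t₁,t₂,t₃) = (1/2)t₁²t₃ + (1/2)t₁t₂² − (1/24)t₂⁴ + t₂·exp(t₃) on ℝ³ and define the Legendre-type transform t̂ : ℝ³ → ℝ³, t̂_α = ∂²F/∂t₃∂t_α, so that t̂(t₁,t₂,t₃) = (t₁, exp(t₃), t₂·exp(t₃)). Then: (i) the Jacobian determinant det(∂t̂_α/∂t_β) equals −exp(2t₃) at every point; and (ii) with G(t) = −(1/24)t₃ and Ĝ(s₁,s₂,s₃) = −(1/8)·log s₂ (defined for s₂ > 0), one has Ĝ(t̂(t)) = G(t) − (1/24)·log|det(∂t̂_α/∂t_β)| for all t ∈ ℝ³. -/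

import Mathlib

open Real

/-- Partial derivative of a function of `n` real variables in the `i`-th coordinate
direction. -/
noncomputable def pd {n : ℕ} (i : Fin n) (f : (Fin n → ℝ) → ℝ) : (Fin n → ℝ) → ℝ :=
  fun t => fderiv ℝ f t (Pi.single i 1)

/-- The Jacobian matrix `(∂Ψ^α/∂t^β)` of a map `Ψ : ℝⁿ → ℝⁿ` at the point `t`. -/
noncomputable def jacobian {n : ℕ} (Ψ : (Fin n → ℝ) → (Fin n → ℝ)) (t : Fin n → ℝ) :
    Matrix (Fin n) (Fin n) ℝ :=
  Matrix.of fun α β => pd β (fun s => Ψ s α) t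

/-- The prepotential of the Frobenius manifold `ℂ³/W̃⁽¹⁾(A₂)`:
`F = ½t₁²t₃ + ½t₁t₂² − (1/24)t₂⁴ + t₂ e^{t₃}`. -/
noncomputable def Fa2 : (Fin 3 → ℝ) → ℝ :=
  fun t => (1/2) * (t 0)^2 * t 2 + (1/2) * t 0 * (t 1)^2 - (1/24) * (t 1)^4
    + t 1 * Real.exp (t 2)

lemma pd_of_hasFDerivAt {n : ℕ} {f : (Fin n → ℝ) → ℝ} {L : (Fin n → ℝ) →L[ℝ] ℝ} {t}
    (h : HasFDerivAt f L t) (i : Fin n) :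
    pd i f t = L (Pi.single i 1) := by
  unfold pd; rw [h.fderiv]

lemma hc (i : Fin 3) (t : Fin 3 → ℝ) :
    HasFDerivAt (fun s : Fin 3 → ℝ => s i)
      (ContinuousLinearMap.proj (R := ℝ) (φ := fun _ : Fin 3 => ℝ) i) t :=
  (ContinuousLinearMap.proj (R := ℝ) (φ := fun _ : Fin 3 => ℝ) i).hasFDerivAt

lemma hexp (t : Fin 3 → ℝ) :
    HasFDerivAt (fun s : Fin 3 → ℝ => Real.exp (s 2))
      (Real.exp (t 2) • ContinuousLinearMap.proj (R := ℝ) (φ := fun _ : Fin 3 => ℝ) 2) t :=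
  by have := (Real.hasDerivAt_exp (t 2)).comp_hasFDerivAt t (hc 2 t); exact this

lemma hF_Fa2 (t : Fin 3 → ℝ) : HasFDerivAt Fa2
    ((((1/2 * t 0 ^ 2) • ContinuousLinearMap.proj (R := ℝ) (φ := fun _ : Fin 3 => ℝ) 2 +
        t 2 • (1/2 : ℝ) • ((2 : ℕ) * t 0 ^ (2 - 1)) •
          ContinuousLinearMap.proj (R := ℝ) (φ := fun _ : Fin 3 => ℝ) 0 +
        ((1/2 * t 0) • ((2 : ℕ) * t 1 ^ (2 - 1)) •
            ContinuousLinearMap.proj (R := ℝ) (φ := fun _ : Fin 3 => ℝ) 1 +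
          (t 1 ^ 2) • (1/2 : ℝ) • ContinuousLinearMap.proj (R := ℝ) (φ := fun _ : Fin 3 => ℝ) 0)) -
        (1/24 : ℝ) • ((4 : ℕ) * t 1 ^ (4 - 1)) •
          ContinuousLinearMap.proj (R := ℝ) (φ := fun _ : Fin 3 => ℝ) 1) +
      (t 1 • Real.exp (t 2) • ContinuousLinearMap.proj (R := ℝ) (φ := fun _ : Fin 3 => ℝ) 2 +
        Real.exp (t 2) • ContinuousLinearMap.proj (R := ℝ) (φ := fun _ : Fin 3 => ℝ) 1)) t :=
  (((((hasDerivAt_pow 2 (t 0)).comp_hasFDerivAt t (hc 0 t)).const_mul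
      ((1:ℝ)/2)).mul (hc 2 t)).add
      (((hc 0 t).const_mul ((1:ℝ)/2)).mul
        ((hasDerivAt_pow 2 (t 1)).comp_hasFDerivAt t (hc 1 t)))).sub
      ((((hasDerivAt_pow 4 (t 1)).comp_hasFDerivAt t (hc 1 t))).const_mul ((1:ℝ)/24))
      |>.add ((hc 1 t).mul (hexp t))

lemma pd0_Fa2 (t : Fin 3 → ℝ) : pd 0 Fa2 t = t 0 * t 2 + (1/2) * (t 1)^2 := by
  rw [pd_of_hasFDerivAt (hF_Fa2 t)]
  simp [ContinuousLinearMap.proj_apply, Pi.single_eq_same, Pi.single_eq_of_ne]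
  ring

lemma pd1_Fa2 (t : Fin 3 → ℝ) :
    pd 1 Fa2 t = t 0 * t 1 - (1/6) * (t 1)^3 + Real.exp (t 2) := by
  rw [pd_of_hasFDerivAt (hF_Fa2 t)]
  simp [ContinuousLinearMap.proj_apply, Pi.single_eq_same, Pi.single_eq_of_ne]
  ring

lemma pd2_Fa2 (t : Fin 3 → ℝ) :
    pd 2 Fa2 t = (1/2) * (t 0)^2 + t 1 * Real.exp (t 2) := by
  rw [pd_of_hasFDerivAt (hF_Fa2 t)]
  simp [ContinuousLinearMap.proj_apply, Pi.single_eq_same, Pi.single_eq_of_ne]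

/-- derivative of `s ↦ s i` -/
lemma pd_coord (i j : Fin 3) (t : Fin 3 → ℝ) :
    pd j (fun s : Fin 3 → ℝ => s i) t = if i = j then 1 else 0 := by
  rw [pd_of_hasFDerivAt (hc i t)]
  rcases eq_or_ne i j with h | h
  · subst h; simp
  · simp [ContinuousLinearMap.proj_apply, Pi.single_eq_of_ne h.symm, h]

lemma pd_exp (j : Fin 3) (t : Fin 3 → ℝ) :
    pd j (fun s : Fin 3 → ℝ => Real.exp (s 2)) t
      = if j = 2 then Real.exp (t 2) else 0 := by
  rw [pd_of_hasFDerivAt (hexp t)]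
  rcases eq_or_ne j 2 with h | h
  · subst h; simp
  · simp [ContinuousLinearMap.proj_apply, Pi.single_eq_of_ne h, h]

lemma pd_mulexp (j : Fin 3) (t : Fin 3 → ℝ) :
    pd j (fun s : Fin 3 → ℝ => s 1 * Real.exp (s 2)) t
      = if j = 1 then Real.exp (t 2) else if j = 2 then t 1 * Real.exp (t 2) else 0 := by
  have h : HasFDerivAt (fun s : Fin 3 → ℝ => s 1 * Real.exp (s 2)) _ t := (hc 1 t).mul (hexp t)
  rw [pd_of_hasFDerivAt h]
  fin_cases j <;>
    simp [ContinuousLinearMap.proj_apply, Pi.single_eq_same, Pi.single_eq_of_ne]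

/-- The transformation law `Ĝ = G − (1/24) log det(∂t̂/∂t)` of the `G`-function under
the Legendre-type symmetry `S₃`, verified for `ℂ³/W̃⁽¹⁾(A₂)`: the new flat coordinates
`t̂_α = ∂²F/∂t₃∂t_α` are `(t₁, e^{t₃}, t₂e^{t₃})`, the Jacobian determinant
`det(∂t̂_α/∂t_β)` equals `−e^{2t₃}`, and with `G = −t₃/24`, `Ĝ(s) = −(1/8) log s₂` one
has `Ĝ(t̂(t)) = G(t) − (1/24) log |det(∂t̂/∂t)|` everywhere. -/
theorem G_transform_S3_tildeW1_A2
    (that : (Fin 3 → ℝ) → (Fin 3 → ℝ))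
    (hthat : that = fun t => fun α =>
      if α = 0 then t 0 else if α = 1 then Real.exp (t 2) else t 1 * Real.exp (t 2))
    (G Ghat : (Fin 3 → ℝ) → ℝ)
    (hGdef : G = fun t => -(1/24) * t 2)
    (hGhat : Ghat = fun s => -(1/8) * Real.log (s 1)) :
    (∀ t : Fin 3 → ℝ, ∀ α : Fin 3, pd 2 (pd α Fa2) t = that t α) ∧
    (∀ t : Fin 3 → ℝ, (jacobian that t).det = -Real.exp (2 * t 2)) ∧
    (∀ t : Fin 3 → ℝ,
      Ghat (that t) = G t - (1/24) * Real.log |(jacobian that t).det|) := by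
  subst hthat hGdef hGhat
  have hjac : ∀ t : Fin 3 → ℝ, ∀ α β : Fin 3, jacobian
      (fun t => fun α => if α = 0 then t 0 else if α = 1 then Real.exp (t 2)
        else t 1 * Real.exp (t 2)) t α β =
      !![1, 0, 0; 0, 0, Real.exp (t 2); 0, Real.exp (t 2), t 1 * Real.exp (t 2)] α β := by
    intro t α β
    have hα : α = 0 ∨ α = 1 ∨ α = 2 := by omega
    rcases hα with rfl | rfl | rfl <;>
      · simp only [jacobian, Matrix.of_apply]
        norm_num [pd_coord, pd_exp, pd_mulexp]
        fin_cases β <;> simp [pd_coord, pd_exp, pd_mulexp]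
  have hjac' : ∀ t : Fin 3 → ℝ, jacobian
      (fun t => fun α => if α = 0 then t 0 else if α = 1 then Real.exp (t 2)
        else t 1 * Real.exp (t 2)) t =
      !![1, 0, 0; 0, 0, Real.exp (t 2); 0, Real.exp (t 2), t 1 * Real.exp (t 2)] := by
    intro t; ext α β; exact hjac t α β
  have hdet : ∀ t : Fin 3 → ℝ, (jacobian
      (fun t => fun α => if α = 0 then t 0 else if α = 1 then Real.exp (t 2)
        else t 1 * Real.exp (t 2)) t).det = -Real.exp (2 * t 2) := by
    intro t
    rw [hjac' t, Matrix.det_fin_three]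
    simp [← Real.exp_add, two_mul]
  refine ⟨?_, hdet, ?_⟩
  · intro t α
    have hα : α = 0 ∨ α = 1 ∨ α = 2 := by omega
    rcases hα with rfl | rfl | rfl
    · have e : pd (0 : Fin 3) Fa2 = fun s => s 0 * s 2 + (1/2) * (s 1)^2 :=
        funext pd0_Fa2
      rw [e]
      have h : HasFDerivAt (fun s : Fin 3 → ℝ => s 0 * s 2 + (1/2) * (s 1)^2) _ t :=
        ((hc 0 t).mul (hc 2 t)).add
          (((hasDerivAt_pow 2 (t 1)).comp_hasFDerivAt t (hc 1 t)).const_mul ((1:ℝ)/2))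
      rw [pd_of_hasFDerivAt h]
      simp [ContinuousLinearMap.proj_apply, Pi.single_eq_same, Pi.single_eq_of_ne]
    · have e : pd (1 : Fin 3) Fa2 =
          fun s => s 0 * s 1 - (1/6) * (s 1)^3 + Real.exp (s 2) := funext pd1_Fa2
      rw [e]
      have h : HasFDerivAt
          (fun s : Fin 3 → ℝ => s 0 * s 1 - (1/6) * (s 1)^3 + Real.exp (s 2)) _ t :=
        (((hc 0 t).mul (hc 1 t)).sub
          (((hasDerivAt_pow 3 (t 1)).comp_hasFDerivAt t (hc 1 t)).const_mul ((1:ℝ)/6))).add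
          (hexp t)
      rw [pd_of_hasFDerivAt h]
      simp [ContinuousLinearMap.proj_apply, Pi.single_eq_same, Pi.single_eq_of_ne]
    · have e : pd (2 : Fin 3) Fa2 =
          fun s => (1/2) * (s 0)^2 + s 1 * Real.exp (s 2) := funext pd2_Fa2
      rw [e]
      have h : HasFDerivAt
          (fun s : Fin 3 → ℝ => (1/2) * (s 0)^2 + s 1 * Real.exp (s 2)) _ t :=
        (((hasDerivAt_pow 2 (t 0)).comp_hasFDerivAt t (hc 0 t)).const_mul ((1:ℝ)/2)).add
          ((hc 1 t).mul (hexp t))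
      rw [pd_of_hasFDerivAt h]
      simp [ContinuousLinearMap.proj_apply, Pi.single_eq_same, Pi.single_eq_of_ne]
  · intro t
    rw [hdet t]
    simp only [abs_neg, abs_of_pos (Real.exp_pos _), Real.log_exp]
    norm_num
    ring
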